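/- Let d ≥ 2, n = 2d+2, r = 2d-1. Define γ(n,d,r) = min{φ(f,d) : f is an n-weight function with f⁺ = r}. Then γ(n,d,r) = C(2d-1, d) + C(2d-1, d-1). -/

import Mathlib

open Finset

lemma card_fin_lt (n k : ℕ) (h : k ≤ n) :
    (univ.filter fun x : Fin n => (x:ℕ) < k).card = k := by
  rw [show (univ.filter fun x : Fin n => (x:ℕ) < k) = Finset.attachFin (range k)
      (fun m hm => lt_of_lt_of_le (mem_range.mp hm) h) from by
    ext x; simp [Finset.mem_attachFin]]
  rw [Finset.card_attachFin, card_range]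

lemma upper (d : ℕ) (hd : 2 ≤ d) :
    ∃ f : Fin (2 * d + 2) → ℝ, 0 ≤ ∑ x, f x ∧
        (univ.filter fun x => 0 ≤ f x).card = 2 * d - 1 ∧
        ((univ.powersetCard d).filter fun Y => 0 ≤ ∑ y ∈ Y, f y).card = (2*d).choose d := by
  have hdR : (2:ℝ) ≤ (d:ℝ) := by exact_mod_cast hd
  set g : ℕ → ℝ := fun i => if i < 2*d-1 then 1 else if i = 2*d-1 then -(1/2) else 3/4 - d with hg
  refine ⟨fun x => g (x:ℕ), ?_, ?_, ?_⟩
  · -- sum = 0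
    show 0 ≤ ∑ x : Fin (2*d+2), g (x:ℕ)
    rw [Fin.sum_univ_eq_sum_range g (2*d+2)]
    rw [show 2*d+2 = (2*d-1)+1+1+1 by omega]
    rw [Finset.sum_range_succ, Finset.sum_range_succ, Finset.sum_range_succ]
    have h1 : ∑ i ∈ range (2*d-1), g i = (2*d-1 : ℕ) := by
      rw [Finset.sum_congr rfl (fun i hi => if_pos (mem_range.mp hi))]
      simp
    rw [h1]
    have e1 : g (2*d-1) = -(1/2) := by
      simp only [hg]; rw [if_neg (by omega)]; simp
    have e2 : g (2*d-1+1) = 3/4 - d := by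
      simp only [hg]; rw [if_neg (by omega), if_neg (by omega)]
    have e3 : g (2*d-1+1+1) = 3/4 - d := by
      simp only [hg]; rw [if_neg (by omega), if_neg (by omega)]
    rw [e1, e2, e3]
    have hc : ((2*d-1 : ℕ) : ℝ) = 2*(d:ℝ) - 1 := by
      push_cast [Nat.cast_sub (show (1:ℕ) ≤ 2*d by omega)]; ring
    rw [hc]; linarith
  · -- f⁺ = 2d - 1
    show (univ.filter fun x : Fin (2*d+2) => 0 ≤ g (x:ℕ)).card = 2*d-1
    have heq : (univ.filter fun x : Fin (2*d+2) => 0 ≤ g (x:ℕ))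
        = univ.filter fun x : Fin (2*d+2) => (x:ℕ) < 2*d-1 := by
      apply filter_congr
      intro x _
      by_cases h1 : (x:ℕ) < 2*d-1
      · exact iff_of_true (by simp [hg, h1]) h1
      · by_cases h2 : (x:ℕ) = 2*d-1
        · refine iff_of_false ?_ h1
          simp only [hg]; rw [if_neg h1, if_pos h2]; norm_num
        · refine iff_of_false ?_ h1
          simp only [hg]; rw [if_neg h1, if_neg h2]; push_neg; linarith
    rw [heq, card_fin_lt _ _ (by omega)]
  · -- count
    show ((univ.powersetCard d).filter fun Y : Finset (Fin (2*d+2)) => 0 ≤ ∑ y ∈ Y, g (y:ℕ)).card = (2*d).choose d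
    have hA : ((univ.powersetCard d).filter fun Y : Finset (Fin (2*d+2)) => 0 ≤ ∑ y ∈ Y, g (y:ℕ))
        = (univ.filter fun x : Fin (2*d+2) => (x:ℕ) < 2*d).powersetCard d := by
      ext Y
      simp only [mem_filter, mem_powersetCard, subset_univ, true_and]
      constructor
      · rintro ⟨hcard, hsum⟩
        refine ⟨fun y hy => ?_, hcard⟩
        simp only [mem_filter, mem_univ, true_and]
        by_contra hbig
        push_neg at hbig
        have hfy : g (y:ℕ) = 3/4 - d := by
          simp only [hg]; rw [if_neg (by omega), if_neg (by omega)]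
        have hb : ∀ z ∈ Y.erase y, g (z:ℕ) ≤ 1 := by
          intro z _
          simp only [hg]
          split
          · norm_num
          · split
            · norm_num
            · linarith
        have hrest : ∑ z ∈ Y.erase y, g (z:ℕ) ≤ (d:ℝ) - 1 := by
          calc ∑ z ∈ Y.erase y, g (z:ℕ) ≤ (Y.erase y).card • (1:ℝ) :=
                Finset.sum_le_card_nsmul _ _ _ hb
            _ = ((d-1 : ℕ) : ℝ) := by
                rw [card_erase_of_mem hy, hcard, nsmul_eq_mul, mul_one]
            _ = (d:ℝ) - 1 := by
                push_cast [Nat.cast_sub (show (1:ℕ) ≤ d by omega)]; ring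
        have hsplit : g (y:ℕ) + ∑ z ∈ Y.erase y, g (z:ℕ) = ∑ z ∈ Y, g (z:ℕ) :=
          Finset.add_sum_erase Y (fun z => g (z:ℕ)) hy
        rw [hfy] at hsplit
        linarith
      · rintro ⟨hsub, hcard⟩
        refine ⟨hcard, ?_⟩
        have hcong : ∑ y ∈ Y, g (y:ℕ) = ∑ y ∈ Y, (if (y:ℕ) = 2*d-1 then (-(1/2):ℝ) else 1) := by
          apply Finset.sum_congr rfl
          intro y hy
          have hyA : (y:ℕ) < 2*d := by
            have := hsub hy; simp only [mem_filter] at this; exact this.2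
          simp only [hg]
          by_cases h2 : (y:ℕ) = 2*d-1
          · rw [if_neg (by omega), if_pos h2, if_pos h2]
          · rw [if_pos (by omega), if_neg h2]
        rw [hcong, Finset.sum_ite]
        have hc0 : (Y.filter fun y : Fin (2*d+2) => (y:ℕ) = 2*d-1).card ≤ 1 := by
          apply Finset.card_le_one.mpr
          intro a ha b hb
          simp only [mem_filter] at ha hb
          exact Fin.ext (ha.2.trans hb.2.symm)
        have hc1 : (Y.filter fun y : Fin (2*d+2) => (y:ℕ) = 2*d-1).card
            + (Y.filter fun y : Fin (2*d+2) => ¬ (y:ℕ) = 2*d-1).card = d := by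
          rw [Finset.card_filter_add_card_filter_not, hcard]
        simp only [sum_const, nsmul_eq_mul, mul_one]
        set c0 := (Y.filter fun y : Fin (2*d+2) => (y:ℕ) = 2*d-1).card
        set c1 := (Y.filter fun y : Fin (2*d+2) => ¬ (y:ℕ) = 2*d-1).card
        have hc0R : (c0:ℝ) ≤ 1 := by exact_mod_cast hc0
        have hcR : (c0:ℝ) + (c1:ℝ) = d := by exact_mod_cast hc1
        linarith
    rw [hA, card_powersetCard, card_fin_lt _ _ (by omega)]



lemma binom1 (d : ℕ) (hd : 2 ≤ d) :
    (2*d-1).choose d + (2*d-1).choose (d-1) = (2*d).choose d := by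
  obtain ⟨e, rfl⟩ : ∃ e, d = e + 2 := ⟨d - 2, by omega⟩
  have h := Nat.choose_succ_succ' (2*e+3) (e+1)
  rw [show 2*(e+2)-1 = 2*e+3 by omega, show (e+2)-1 = e+1 by omega,
    show 2*(e+2) = 2*e+3+1 by omega, show e+2 = e+1+1 by omega] at *
  omega

lemma pascal (d : ℕ) (hd : 2 ≤ d) :
    (2*d-1).choose (d-1) = (2*d-2).choose (d-1) + (2*d-2).choose (d-2) := by
  obtain ⟨e, rfl⟩ : ∃ e, d = e + 2 := ⟨d - 2, by omega⟩
  have h := Nat.choose_succ_succ' (2*e+2) e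
  rw [show 2*(e+2)-1 = 2*e+2+1 by omega, show (e+2)-1 = e+1 by omega,
    show 2*(e+2)-2 = 2*e+2 by omega, show (e+2)-2 = e by omega] at *
  omega

lemma binom2 (d : ℕ) (hd : 2 ≤ d) :
    (2*d-1).choose (d-1) ≤ 3 * ((2*d-2).choose (d-2)) := by
  have hp := pascal d hd
  obtain ⟨e, rfl⟩ : ∃ e, d = e + 2 := ⟨d - 2, by omega⟩
  rw [show 2*(e+2)-2 = 2*e+2 by omega, show (e+2)-1 = e+1 by omega,
    show (e+2)-2 = e by omega] at *
  have h := Nat.choose_succ_right_eq (2*e+2) e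
  rw [show (2*e+2) - e = e + 2 by omega] at h
  have h3 : (2*e+2).choose (e+1) ≤ 2 * (2*e+2).choose e := by
    refine Nat.le_of_mul_le_mul_right ?_ (show 0 < e+1 by omega)
    calc (2*e+2).choose (e+1) * (e+1) = (2*e+2).choose e * (e+2) := h
      _ ≤ 2 * (2*e+2).choose e * (e+1) := by nlinarith [Nat.choose_pos (show e ≤ 2*e+2 by omega)]
  omega

lemma choose_pred (d : ℕ) (hd : 2 ≤ d) : d.choose (d-1) = d := by
  obtain ⟨e, rfl⟩ : ∃ e, d = e + 2 := ⟨d - 2, by omega⟩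
  rw [show (e+2)-1 = e+1 by omega, ← Nat.choose_symm (by omega : e+1 ≤ e+2),
    show (e+2)-(e+1) = 1 by omega, Nat.choose_one_right]

section
variable {d : ℕ} {f : Fin (2*d+2) → ℝ}

lemma lower (d : ℕ) (hd : 2 ≤ d) (f : Fin (2*d+2) → ℝ) (hsum : 0 ≤ ∑ x, f x)
    (hP : (univ.filter fun x => 0 ≤ f x).card = 2*d-1) :
    (2*d-1).choose d + (2*d-1).choose (d-1) ≤
      ((univ.powersetCard d).filter fun Y => 0 ≤ ∑ y ∈ Y, f y).card := by
  classical
  set P : Finset (Fin (2*d+2)) := univ.filter fun x => 0 ≤ f x with hPdef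
  have hfP : ∀ x ∈ P, 0 ≤ f x := fun x hx => (mem_filter.mp hx).2
  -- the complement has exactly 3 elements
  have hsplitc : P.card + (univ.filter fun x => ¬ 0 ≤ f x).card = 2*d+2 := by
    rw [Finset.card_filter_add_card_filter_not]
    simp
  have hNc : (univ.filter fun x => ¬ 0 ≤ f x).card = 3 := by omega
  obtain ⟨a, b, c, hab, hac, hbc, hset⟩ := Finset.card_eq_three.mp hNc
  -- pick the minimum as n3
  obtain ⟨n1, n2, n3, h12, h13, h23, hset3, hm1, hm2⟩ :
      ∃ x y z : Fin (2*d+2), x ≠ y ∧ x ≠ z ∧ y ≠ z ∧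
        (univ.filter fun x => ¬ 0 ≤ f x) = {x, y, z} ∧ f z ≤ f x ∧ f z ≤ f y := by
    rcases le_total (f a) (f b) with h | h
    · rcases le_total (f a) (f c) with h' | h'
      · exact ⟨b, c, a, hbc, fun hh => hab hh.symm, fun hh => hac hh.symm,
          by rw [hset]; ext x; simp; tauto, h, h'⟩
      · exact ⟨a, b, c, hab, hac, hbc, hset, h', le_trans h' h⟩
    · rcases le_total (f b) (f c) with h' | h'
      · exact ⟨a, c, b, hac, hab, fun hh => hbc hh.symm,
          by rw [hset]; ext x; simp; tauto, h, h'⟩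
      · exact ⟨a, b, c, hab, hac, hbc, hset, le_trans h' h, h'⟩
  have hmemN : ∀ x ∈ ({n1, n2, n3} : Finset (Fin (2*d+2))), ¬ 0 ≤ f x := by
    intro x hx
    rw [← hset3] at hx
    exact (mem_filter.mp hx).2
  have hn1 : ¬ 0 ≤ f n1 := hmemN n1 (by simp)
  have hn2 : ¬ 0 ≤ f n2 := hmemN n2 (by simp)
  have hn3 : ¬ 0 ≤ f n3 := hmemN n3 (by simp)
  have hn1P : n1 ∉ P := fun hh => hn1 (hfP n1 hh)
  have hn2P : n2 ∉ P := fun hh => hn2 (hfP n2 hh)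
  have hn3P : n3 ∉ P := fun hh => hn3 (hfP n3 hh)
  -- the sum over P
  have hSP : -(f n1 + f n2 + f n3) ≤ ∑ x ∈ P, f x := by
    have h0 := Finset.sum_filter_add_sum_filter_not univ (fun x => 0 ≤ f x) f
    rw [hset3] at h0
    have hsN : ∑ x ∈ ({n1, n2, n3} : Finset (Fin (2*d+2))), f x = f n1 + f n2 + f n3 := by
      rw [Finset.sum_insert (by simp [h12, h13]), Finset.sum_insert (by simp [h23]),
        Finset.sum_singleton]
      ring
    rw [hsN] at h0
    rw [← hPdef] at h0
    linarith [hsum, h0.ge, h0.le]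
  -- good families
  set good : Fin (2*d+2) → Finset (Finset (Fin (2*d+2))) :=
    fun n => (P.powersetCard (d-1)).filter (fun C => 0 ≤ ∑ y ∈ C, f y + f n) with hgood
  -- key counting inequality
  have key : (2*d-1).choose (d-1) ≤ (good n1).card + (good n2).card + (good n3).card := by
    by_cases hcase : ∃ p ∈ P, -(f n3) ≤ f p
    · -- Case I
      obtain ⟨pm, hpmP, hpmv⟩ := hcase
      set G : Finset (Finset (Fin (2*d+2))) :=
        ((P.erase pm).powersetCard (d-2)).image (insert pm) with hG
      have hGsub : ∀ n : Fin (2*d+2), f n3 ≤ f n → G ⊆ good n := by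
        intro n hle Y hY
        rw [hG, mem_image] at hY
        obtain ⟨C0, hC0, rfl⟩ := hY
        rw [mem_powersetCard] at hC0
        obtain ⟨hC0sub, hC0card⟩ := hC0
        have hpmC0 : pm ∉ C0 := fun hh => (mem_erase.mp (hC0sub hh)).1 rfl
        have hsubP : C0 ⊆ P := hC0sub.trans (erase_subset _ _)
        rw [hgood, mem_filter, mem_powersetCard]
        refine ⟨⟨insert_subset hpmP hsubP, ?_⟩, ?_⟩
        · rw [card_insert_of_notMem hpmC0, hC0card]; omega
        · rw [Finset.sum_insert hpmC0]
          have : 0 ≤ ∑ y ∈ C0, f y := Finset.sum_nonneg (fun y hy => hfP y (hsubP hy))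
          linarith
      have hGcard : G.card = (2*d-2).choose (d-2) := by
        rw [hG, Finset.card_image_of_injOn, card_powersetCard,
          card_erase_of_mem hpmP, hP, show 2*d-1-1 = 2*d-2 by omega]
        intro C1 hC1 C2 hC2 hins
        simp only [Finset.mem_coe, mem_powersetCard] at hC1 hC2
        have h1 : pm ∉ C1 := fun hh => (mem_erase.mp (hC1.1 hh)).1 rfl
        have h2 : pm ∉ C2 := fun hh => (mem_erase.mp (hC2.1 hh)).1 rfl
        rw [← Finset.erase_insert h1, ← Finset.erase_insert h2, hins]
      have hc1 : G.card ≤ (good n1).card := card_le_card (hGsub n1 hm1)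
      have hc2 : G.card ≤ (good n2).card := card_le_card (hGsub n2 hm2)
      have hc3 : G.card ≤ (good n3).card := card_le_card (hGsub n3 le_rfl)
      have := binom2 d hd
      omega
    · -- Case II
      push_neg at hcase
      set bad2 : Finset (Finset (Fin (2*d+2))) :=
        (P.powersetCard (d-1)).filter (fun C => ¬ 0 ≤ ∑ y ∈ C, f y + f n2) with hbad2
      have hpart : (good n2).card + bad2.card = (2*d-1).choose (d-1) := by
        rw [hgood, hbad2, Finset.card_filter_add_card_filter_not,
          card_powersetCard, hP]
      -- every (d-1)-subset of P \ B is good for n1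
      have cosetGood : ∀ B ∈ bad2, ∀ C : Finset (Fin (2*d+2)),
          C ⊆ P \ B → C.card = d-1 → C ∈ good n1 := by
        intro B hB C hCsub hCcard
        rw [hbad2, mem_filter, mem_powersetCard] at hB
        obtain ⟨⟨hBsub, hBcard⟩, hBbad⟩ := hB
        rw [not_le] at hBbad
        have hPB : (P \ B).card = d := by
          rw [card_sdiff_of_subset hBsub, hP, hBcard]; omega
        have hone : ((P \ B) \ C).card = 1 := by
          rw [card_sdiff_of_subset hCsub, hPB, hCcard]; omega
        obtain ⟨x, hx⟩ := Finset.card_eq_one.mp hone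
        have hxP : x ∈ P := by
          have : x ∈ (P \ B) \ C := by rw [hx]; exact mem_singleton_self x
          exact (mem_sdiff.mp ((mem_sdiff.mp this).1)).1
        have hsum1 : ∑ y ∈ (P \ B) \ C, f y + ∑ y ∈ C, f y = ∑ y ∈ P \ B, f y :=
          Finset.sum_sdiff hCsub
        have hsum2 : ∑ y ∈ P \ B, f y + ∑ y ∈ B, f y = ∑ y ∈ P, f y :=
          Finset.sum_sdiff hBsub
        rw [hx, Finset.sum_singleton] at hsum1
        have hxlt : f x < -(f n3) := hcase x hxP
        rw [hgood, mem_filter, mem_powersetCard]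
        refine ⟨⟨hCsub.trans (sdiff_subset), hCcard⟩, ?_⟩
        linarith
      -- double counting
      set E : Finset (Finset (Fin (2*d+2)) × Finset (Fin (2*d+2))) :=
        (bad2 ×ˢ (good n1)).filter (fun z => Disjoint z.1 z.2) with hE
      have hfib1 : ∀ B ∈ bad2, (E.filter fun z => z.1 = B)
          = {B} ×ˢ ((P \ B).powersetCard (d-1)) := by
        intro B hB
        ext z
        simp only [hE, mem_filter, mem_product, mem_singleton, mem_powersetCard]
        constructor
        · rintro ⟨⟨⟨hz1, hz2⟩, hdisj⟩, rfl⟩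
          refine ⟨rfl, ?_, ?_⟩
          · rw [hgood, mem_filter, mem_powersetCard] at hz2
            exact subset_sdiff.mpr ⟨hz2.1.1, hdisj.symm⟩
          · rw [hgood, mem_filter, mem_powersetCard] at hz2
            exact hz2.1.2
        · rintro ⟨rfl, hsub, hcard⟩
          refine ⟨⟨⟨hB, cosetGood _ hB _ hsub hcard⟩, ?_⟩, rfl⟩
          exact (Finset.disjoint_of_subset_right hsub sdiff_disjoint.symm)
      have hfib1card : ∀ B ∈ bad2, (E.filter fun z => z.1 = B).card = d := by
        intro B hB
        rw [hfib1 B hB, Finset.card_product, card_singleton, one_mul,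
          card_powersetCard]
        rw [hbad2, mem_filter, mem_powersetCard] at hB
        rw [card_sdiff_of_subset hB.1.1, hP, hB.1.2, show 2*d-1-(d-1) = d by omega,
          choose_pred d hd]
      have hE1 : E.card = bad2.card * d := by
        rw [Finset.card_eq_sum_card_fiberwise
          (f := fun z => z.1) (t := bad2)
          (fun z hz => by
            rw [hE, Finset.mem_coe, mem_filter, mem_product] at hz
            exact hz.1.1)]
        rw [Finset.sum_congr rfl hfib1card, Finset.sum_const, smul_eq_mul]
      have hfib2 : ∀ C ∈ good n1, (E.filter fun z => z.2 = C).card ≤ d := by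
        intro C hC
        have hsubC : (E.filter fun z => z.2 = C) ⊆ ((P \ C).powersetCard (d-1)) ×ˢ {C} := by
          intro z hz
          simp only [hE, mem_filter, mem_product] at hz
          obtain ⟨⟨⟨hz1, hz2⟩, hdisj⟩, hz2C⟩ := hz
          rw [mem_product, mem_singleton, mem_powersetCard]
          rw [hbad2, mem_filter, mem_powersetCard] at hz1
          subst hz2C
          exact ⟨⟨subset_sdiff.mpr ⟨hz1.1.1, hdisj⟩, hz1.1.2⟩, rfl⟩
        calc (E.filter fun z => z.2 = C).card
            ≤ (((P \ C).powersetCard (d-1)) ×ˢ ({C} : Finset (Finset (Fin (2*d+2))))).card :=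
              card_le_card hsubC
          _ = (P \ C).card.choose (d-1) := by
              rw [Finset.card_product, card_singleton, mul_one, card_powersetCard]
          _ ≤ d := by
              rw [hgood, mem_filter, mem_powersetCard] at hC
              rw [card_sdiff_of_subset hC.1.1, hP, hC.1.2, show 2*d-1-(d-1) = d by omega,
                choose_pred d hd]
      have hE2 : E.card ≤ (good n1).card * d := by
        rw [Finset.card_eq_sum_card_fiberwise
          (f := fun z => z.2) (t := good n1)
          (fun z hz => by
            rw [hE, Finset.mem_coe, mem_filter, mem_product] at hz
            exact hz.1.2)]
        calc ∑ C ∈ good n1, (E.filter fun z => z.2 = C).card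
            ≤ ∑ C ∈ good n1, d := Finset.sum_le_sum hfib2
          _ = (good n1).card * d := by rw [Finset.sum_const, smul_eq_mul]
      have hb2g1 : bad2.card ≤ (good n1).card := by
        have := hE1 ▸ hE2
        exact Nat.le_of_mul_le_mul_right this (by omega)
      omega
  -- assembly
  set Phi := (univ.powersetCard d).filter (fun Y : Finset (Fin (2*d+2)) => 0 ≤ ∑ y ∈ Y, f y) with hPhi
  set F0 := P.powersetCard d with hF0
  have hF0sub : F0 ⊆ Phi := by
    intro Y hY
    rw [hF0, mem_powersetCard] at hY
    rw [hPhi, mem_filter, mem_powersetCard]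
    exact ⟨⟨subset_univ Y, hY.2⟩, Finset.sum_nonneg (fun y hy => hfP y (hY.1 hy))⟩
  have hFisub : ∀ n : Fin (2*d+2), n ∉ P → ¬ 0 ≤ f n → ((good n).image (insert n)) ⊆ Phi := by
    intro n hnP hn Y hY
    rw [mem_image] at hY
    obtain ⟨C, hC, rfl⟩ := hY
    rw [hgood, mem_filter, mem_powersetCard] at hC
    obtain ⟨⟨hCsub, hCcard⟩, hCsum⟩ := hC
    have hnC : n ∉ C := fun hh => hnP (hCsub hh)
    rw [hPhi, mem_filter, mem_powersetCard]
    refine ⟨⟨subset_univ _, ?_⟩, ?_⟩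
    · rw [card_insert_of_notMem hnC, hCcard]; omega
    · rw [Finset.sum_insert hnC]; linarith
  have hinj : ∀ n : Fin (2*d+2), n ∉ P → ((good n).image (insert n)).card = (good n).card := by
    intro n hnP
    apply Finset.card_image_of_injOn
    intro C1 hC1 C2 hC2 hins
    simp only [Finset.mem_coe] at hC1 hC2
    rw [hgood, mem_filter, mem_powersetCard] at hC1 hC2
    have h1 : n ∉ C1 := fun hh => hnP (hC1.1.1 hh)
    have h2 : n ∉ C2 := fun hh => hnP (hC2.1.1 hh)
    rw [← Finset.erase_insert h1, ← Finset.erase_insert h2, hins]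
  have hdisj0 : ∀ n : Fin (2*d+2), n ∉ P → Disjoint F0 ((good n).image (insert n)) := by
    intro n hnP
    rw [Finset.disjoint_left]
    intro Y hY0 hY1
    rw [hF0, mem_powersetCard] at hY0
    rw [mem_image] at hY1
    obtain ⟨C, hC, rfl⟩ := hY1
    exact hnP (hY0.1 (mem_insert_self n C))
  have hdisjij : ∀ n m : Fin (2*d+2), n ≠ m → n ∉ P →
      Disjoint ((good n).image (insert n)) ((good m).image (insert m)) := by
    intro n m hnm hnP
    rw [Finset.disjoint_left]
    intro Y hYn hYm
    rw [mem_image] at hYn hYm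
    obtain ⟨C, hC, rfl⟩ := hYn
    obtain ⟨C', hC', hYeq⟩ := hYm
    rw [hgood, mem_filter, mem_powersetCard] at hC'
    have : n ∈ insert m C' := by rw [hYeq]; exact mem_insert_self n C
    rcases mem_insert.mp this with h | h
    · exact hnm h
    · exact hnP (hC'.1.1 h)
  set F1 := (good n1).image (insert n1) with hF1
  set F2 := (good n2).image (insert n2) with hF2
  set F3 := (good n3).image (insert n3) with hF3
  have hunion : F0 ∪ F1 ∪ F2 ∪ F3 ⊆ Phi :=
    union_subset (union_subset (union_subset hF0sub (hFisub n1 hn1P hn1))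
      (hFisub n2 hn2P hn2)) (hFisub n3 hn3P hn3)
  have hcardunion : (F0 ∪ F1 ∪ F2 ∪ F3).card = F0.card + F1.card + F2.card + F3.card := by
    rw [Finset.card_union_of_disjoint, Finset.card_union_of_disjoint,
      Finset.card_union_of_disjoint]
    · exact hdisj0 n1 hn1P
    · exact Finset.disjoint_union_left.mpr ⟨hdisj0 n2 hn2P, hdisjij n1 n2 h12 hn1P⟩
    · exact Finset.disjoint_union_left.mpr ⟨Finset.disjoint_union_left.mpr
        ⟨hdisj0 n3 hn3P, hdisjij n1 n3 h13 hn1P⟩, hdisjij n2 n3 h23 hn2P⟩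
  have hF0card : F0.card = (2*d-1).choose d := by
    rw [hF0, card_powersetCard, hP]
  have htotal : F0.card + F1.card + F2.card + F3.card ≤ Phi.card := by
    rw [← hcardunion]
    exact card_le_card hunion
  rw [hF1, hinj n1 hn1P] at htotal
  rw [hF2, hinj n2 hn2P] at htotal
  rw [hF3, hinj n3 hn3P] at htotal
  omega

end


open Finset in
theorem stmt_12 (d : ℕ) (hd : 2 ≤ d) :
    IsLeast {m : ℕ | ∃ f : Fin (2 * d + 2) → ℝ, 0 ≤ ∑ x, f x ∧
        (univ.filter fun x => 0 ≤ f x).card = 2 * d - 1 ∧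
        ((univ.powersetCard d).filter fun Y => 0 ≤ ∑ y ∈ Y, f y).card = m}
      ((2 * d - 1).choose d + (2 * d - 1).choose (d - 1)) := by
  constructor
  · obtain ⟨f, h1, h2, h3⟩ := upper d hd
    exact ⟨f, h1, h2, by rw [h3]; exact (binom1 d hd).symm⟩
  · rintro m ⟨f, h1, h2, rfl⟩
    exact lower d hd f h1 h2
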